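/- arXiv:1304.8029 — 3 statements merged into one kernel-verified Lean document; each statement's English description precedes it below -/
import Mathlib

section
/- Let A, B be real m×n matrices with B injective (full column rank), and Q an n×n positive definite matrix. If A has full column rank, then the Schur complement S = AᵀA - AᵀB(BᵀB + Q)⁻¹BᵀA is positive definite. -/
open Matrix

lemma cs_dot {k : ℕ} (u v : Fin k → ℝ) :
    (u ⬝ᵥ v) ^ 2 ≤ (u ⬝ᵥ u) * (v ⬝ᵥ v) := by
  simpa [dotProduct, sq] using Finset.sum_mul_sq_le_sq_mul_sq Finset.univ u v

/-- If `A` and `B` have full column rank and `Q` is positive definite, the Schur complement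
`AᵀA - AᵀB (BᵀB + Q)⁻¹ Bᵀ A` is positive definite. -/
theorem stmt4 {m n : ℕ} (A B : Matrix (Fin m) (Fin n) ℝ) (Q : Matrix (Fin n) (Fin n) ℝ)
    (hA : Function.Injective A.mulVecLin)
    (hB : Function.Injective B.mulVecLin)
    (hQ : Q.PosDef) :
    (Aᵀ * A - Aᵀ * B * (Bᵀ * B + Q)⁻¹ * Bᵀ * A).PosDef := by
  set M : Matrix (Fin n) (Fin n) ℝ := Bᵀ * B + Q with hMdef
  have hBB : (Bᵀ * B).PosSemidef := by
    simpa using posSemidef_conjTranspose_mul_self B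
  have hM : M.PosDef := Matrix.PosDef.posSemidef_add hBB hQ
  have hMinv : M⁻¹.PosDef := hM.inv
  have hMM : M * M⁻¹ = 1 := mul_nonsing_inv M (isUnit_iff_isUnit_det M |>.mp hM.isUnit)
  -- Hermitian part
  have herm : (Aᵀ * A - Aᵀ * B * M⁻¹ * Bᵀ * A).IsHermitian := by
    have h1 : (Aᵀ * A).IsHermitian := by
      simpa using (posSemidef_conjTranspose_mul_self A).isHermitian
    have h2 : ((Bᵀ * A)ᴴ * M⁻¹ * (Bᵀ * A)).IsHermitian :=
      isHermitian_conjTranspose_mul_mul _ hMinv.isHermitian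
    have e : (Bᵀ * A)ᴴ * M⁻¹ * (Bᵀ * A) = Aᵀ * B * M⁻¹ * Bᵀ * A := by
      simp [conjTranspose_eq_transpose_of_trivial, transpose_mul, Matrix.mul_assoc]
    rw [e] at h2
    exact h1.sub h2
  refine PosDef.of_dotProduct_mulVec_pos herm fun x hx => ?_
  set y : Fin m → ℝ := A *ᵥ x with hy
  have hy0 : y ≠ 0 := by
    intro h
    apply hx
    apply hA
    simpa [mulVecLin] using h
  set z : Fin n → ℝ := Bᵀ *ᵥ y with hz
  set w : Fin n → ℝ := M⁻¹ *ᵥ z with hw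
  have hMw : M *ᵥ w = z := by
    rw [hw, mulVec_mulVec, hMM, one_mulVec]
  -- quadratic form identity
  have key : (star x) ⬝ᵥ ((Aᵀ * A - Aᵀ * B * M⁻¹ * Bᵀ * A) *ᵥ x) = y ⬝ᵥ y - z ⬝ᵥ w := by
    simp only [star_trivial, sub_mulVec, dotProduct_sub]
    congr 1
    · rw [← mulVec_mulVec, dotProduct_mulVec, vecMul_transpose]
    · rw [show Aᵀ * B * M⁻¹ * Bᵀ * A = Aᵀ * (B * (M⁻¹ * (Bᵀ * A))) by
        simp [Matrix.mul_assoc]]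
      rw [← mulVec_mulVec, ← mulVec_mulVec, ← mulVec_mulVec, ← mulVec_mulVec,
        dotProduct_mulVec x, vecMul_transpose, dotProduct_mulVec (A *ᵥ x), ← mulVec_transpose]
  rw [key]
  -- scalar estimates
  have hr : 0 < y ⬝ᵥ y :=
    lt_of_le_of_ne (Finset.sum_nonneg fun i _ => mul_self_nonneg _)
      (Ne.symm (fun h => hy0 (dotProduct_self_eq_zero.mp h)))
  by_cases hw0 : w = 0
  · simp [sub_pos]
    have : z ⬝ᵥ w = 0 := by simp [hw0]
    rw [this]; exact hr
  · have hq : 0 < w ⬝ᵥ Q *ᵥ w := by simpa using hQ.dotProduct_mulVec_pos hw0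
    have ht : z ⬝ᵥ w = (B *ᵥ w) ⬝ᵥ (B *ᵥ w) + w ⬝ᵥ Q *ᵥ w := by
      calc z ⬝ᵥ w = (M *ᵥ w) ⬝ᵥ w := by rw [hMw]
        _ = w ⬝ᵥ (M *ᵥ w) := dotProduct_comm _ _
        _ = w ⬝ᵥ ((Bᵀ * B) *ᵥ w) + w ⬝ᵥ Q *ᵥ w := by
            rw [hMdef, add_mulVec, dotProduct_add]
        _ = (B *ᵥ w) ⬝ᵥ (B *ᵥ w) + w ⬝ᵥ Q *ᵥ w := by
            rw [← mulVec_mulVec, dotProduct_mulVec, vecMul_transpose]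
    have ht2 : z ⬝ᵥ w = (B *ᵥ w) ⬝ᵥ y := by
      rw [hz, dotProduct_comm, dotProduct_mulVec, vecMul_transpose, dotProduct_comm]
    have hp : 0 ≤ (B *ᵥ w) ⬝ᵥ (B *ᵥ w) := Finset.sum_nonneg fun i _ => mul_self_nonneg _
    set t := z ⬝ᵥ w with htdef
    have htpos : 0 < t := by rw [ht]; exact add_pos_of_nonneg_of_pos hp hq
    have hcs : t ^ 2 ≤ ((B *ᵥ w) ⬝ᵥ (B *ᵥ w)) * (y ⬝ᵥ y) := by
      rw [show t = B *ᵥ w ⬝ᵥ y from ht2]; exact cs_dot _ _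
    have hplt : (B *ᵥ w) ⬝ᵥ (B *ᵥ w) < t := by rw [ht]; linarith
    have : t ^ 2 < t * (y ⬝ᵥ y) := lt_of_le_of_lt hcs (by
      exact mul_lt_mul_of_pos_right hplt hr)
    have : t < y ⬝ᵥ y := by
      nlinarith
    linarith
end

section
/- For the matrices A_{ij} and B_{ij} defined in the paper (built from time-stamp vectors and the ML delay-estimate coefficients), the Gram identity A_{ji}ᵀA_{ji} = B_{ij}ᵀB_{ij} holds. -/
open Matrix

/-- Gram identity `A_{ji}ᵀ A_{ji} = B_{ij}ᵀ B_{ij}` for the measurement matrices of the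
paper (Eq. (8)), with `A_{ij} = [[-c̃_{i→j}, 1], [c_{j→i}, -1]] + [a_i, b_{ij}] ⊗ 1`,
`B_{ij} = [[c_{i→j}, -1], [-c̃_{j→i}, 1]] + [a_j, -b_{ij}] ⊗ 1`, and `A_{ji}` obtained
from `A_{ij}` by swapping the roles of `i` and `j` (with `b_{ji} = -b_{ij}`). -/
theorem stmt13 {K L : ℕ} (ctij cij : Fin K → ℝ) (ctji cji : Fin L → ℝ) (ai aj bij : ℝ)
    (Aij : Matrix (Fin K ⊕ Fin L) (Fin 2) ℝ)
    (Aji : Matrix (Fin L ⊕ Fin K) (Fin 2) ℝ)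
    (Bij : Matrix (Fin K ⊕ Fin L) (Fin 2) ℝ)
    (hAij : ∀ r c, Aij r c =
      Sum.elim (fun k => ![-(ctij k) + ai, 1 + bij])
               (fun l => ![cji l + ai, -1 + bij]) r c)
    (hAji : ∀ r c, Aji r c =
      Sum.elim (fun l => ![-(ctji l) + aj, 1 + -bij])
               (fun k => ![cij k + aj, -1 + -bij]) r c)
    (hBij : ∀ r c, Bij r c =
      Sum.elim (fun k => ![cij k + aj, -1 + -bij])
               (fun l => ![-(ctji l) + aj, 1 + -bij]) r c) :
    Ajiᵀ * Aji = Bijᵀ * Bij := by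
  ext c c'
  simp only [mul_apply, transpose_apply, hAji, hBij, Fintype.sum_sum_type,
    Sum.elim_inl, Sum.elim_inr]
  ring
end

section
/- Let J be a symmetric positive definite matrix partitioned into blocks with J_xx and J_yy square. Then the spectral radius of J_xx⁻¹ J_xy J_yy⁻¹ J_yx is strictly less than 1. -/
open Matrix

section Aux

lemma dot_symm' {n : ℕ} (M : Matrix (Fin n) (Fin n) ℝ) (hM : M.IsHermitian) (x y : Fin n → ℝ) :
    x ⬝ᵥ M *ᵥ y = y ⬝ᵥ M *ᵥ x := by
  have hMt : Mᵀ = M := by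
    ext i j
    have := congrFun (congrFun hM.eq i) j
    simpa [conjTranspose_apply] using this
  calc x ⬝ᵥ M *ᵥ y = x ᵥ* M ⬝ᵥ y := dotProduct_mulVec x M y
    _ = (Mᵀ *ᵥ x) ⬝ᵥ y := by rw [mulVec_transpose]
    _ = (M *ᵥ x) ⬝ᵥ y := by rw [hMt]
    _ = y ⬝ᵥ M *ᵥ x := dotProduct_comm _ _

lemma dot_map' {n m : ℕ} (M : Matrix (Fin n) (Fin m) ℝ) (x : Fin n → ℝ) (y : Fin m → ℝ) :
    ((↑) ∘ x : Fin n → ℂ) ⬝ᵥ (M.map (algebraMap ℝ ℂ)) *ᵥ ((↑) ∘ y) = ((x ⬝ᵥ M *ᵥ y : ℝ) : ℂ) := by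
  have h1 : (M.map (algebraMap ℝ ℂ)) *ᵥ ((↑) ∘ y : Fin m → ℂ) = (↑) ∘ (M *ᵥ y) := by
    funext i
    exact ((algebraMap ℝ ℂ).map_mulVec M y i).symm
  rw [h1]
  exact ((algebraMap ℝ ℂ).map_dotProduct x (M *ᵥ y)).symm

lemma quad_complexify {n : ℕ} (M : Matrix (Fin n) (Fin n) ℝ) (hM : M.IsHermitian) (v : Fin n → ℂ) :
    star v ⬝ᵥ (M.map (algebraMap ℝ ℂ)) *ᵥ v =
      (((fun i => (v i).re) ⬝ᵥ M *ᵥ (fun i => (v i).re)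
        + (fun i => (v i).im) ⬝ᵥ M *ᵥ (fun i => (v i).im) : ℝ) : ℂ) := by
  set a : Fin n → ℝ := fun i => (v i).re with ha
  set b : Fin n → ℝ := fun i => (v i).im with hb
  have hv : v = ((↑) ∘ a : Fin n → ℂ) + Complex.I • ((↑) ∘ b) := by
    funext i
    simp [a, b, Complex.ext_iff]
  have hstar : star v = ((↑) ∘ a : Fin n → ℂ) + (-Complex.I) • ((↑) ∘ b) := by
    rw [hv]
    funext i
    simp [Complex.ext_iff]
  rw [hstar]
  nth_rewrite 1 [hv]
  simp only [mulVec_add, mulVec_smul, add_dotProduct, smul_dotProduct, dotProduct_add,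
    dotProduct_smul, smul_smul, smul_eq_mul]
  rw [dot_map' M a a, dot_map' M a b, dot_map' M b a, dot_map' M b b, dot_symm' M hM b a]
  push_cast
  ring_nf
  simp [Complex.I_sq]

lemma block_posDef_left {m n : Type*} [Fintype m] [Fintype n]
    {A : Matrix m m ℝ} {B : Matrix m n ℝ} {C : Matrix n m ℝ}
    {D : Matrix n n ℝ} (h : (fromBlocks A B C D).PosDef) : A.PosDef := by
  refine PosDef.of_dotProduct_mulVec_pos (isHermitian_fromBlocks_iff.mp h.1).1 fun x hx => ?_
  have hne : (Sum.elim x (0 : n → ℝ)) ≠ 0 := by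
    intro hc
    exact hx (funext fun i => congrFun hc (Sum.inl i))
  have := h.dotProduct_mulVec_pos (x := Sum.elim x 0) hne
  simpa [fromBlocks_mulVec, Function.star_sumElim, sumElim_dotProduct_sumElim] using this

lemma block_posDef_right {m n : Type*} [Fintype m] [Fintype n]
    {A : Matrix m m ℝ} {B : Matrix m n ℝ} {C : Matrix n m ℝ}
    {D : Matrix n n ℝ} (h : (fromBlocks A B C D).PosDef) : D.PosDef := by
  refine PosDef.of_dotProduct_mulVec_pos (isHermitian_fromBlocks_iff.mp h.1).2.2.2 fun x hx => ?_
  have hne : (Sum.elim (0 : m → ℝ) x) ≠ 0 := by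
    intro hc
    exact hx (funext fun i => congrFun hc (Sum.inr i))
  have := h.dotProduct_mulVec_pos (x := Sum.elim 0 x) hne
  simpa [fromBlocks_mulVec, Function.star_sumElim, sumElim_dotProduct_sumElim] using this

lemma schur_posDef {m n : Type*} [Fintype m] [Fintype n] [DecidableEq n]
    {A : Matrix m m ℝ} {B : Matrix m n ℝ} {D : Matrix n n ℝ}
    (h : (fromBlocks A B Bᴴ D).PosDef) : (A - B * D⁻¹ * Bᴴ).PosDef := by
  have hD : D.PosDef := block_posDef_right h
  haveI : Invertible D := hD.isUnit.invertible
  refine PosDef.of_dotProduct_mulVec_pos ((IsHermitian.fromBlocks₂₂ A B hD.1).mp h.1) fun x hx => ?_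
  set y : n → ℝ := -((D⁻¹ * Bᴴ) *ᵥ x) with hy
  have hne : (Sum.elim x y) ≠ 0 := by
    intro hc
    exact hx (funext fun i => congrFun hc (Sum.inl i))
  have h2 := h.dotProduct_mulVec_pos (x := Sum.elim x y) hne
  rw [dotProduct_mulVec] at h2
  rw [schur_complement_eq₂₂ A B x y hD.1] at h2
  have hzero : (D⁻¹ * Bᴴ) *ᵥ x + y = 0 := by simp [hy]
  rw [hzero] at h2
  simpa [dotProduct_mulVec] using h2

lemma quad_pos {n : ℕ} {M : Matrix (Fin n) (Fin n) ℝ} (hM : M.PosDef) {a b : Fin n → ℝ}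
    (h : a ≠ 0 ∨ b ≠ 0) : 0 < a ⬝ᵥ M *ᵥ a + b ⬝ᵥ M *ᵥ b := by
  have hsa : 0 ≤ a ⬝ᵥ M *ᵥ a := by simpa using hM.posSemidef.dotProduct_mulVec_nonneg a
  have hsb : 0 ≤ b ⬝ᵥ M *ᵥ b := by simpa using hM.posSemidef.dotProduct_mulVec_nonneg b
  rcases h with h | h
  · have : 0 < a ⬝ᵥ M *ᵥ a := by simpa using hM.dotProduct_mulVec_pos h
    linarith
  · have : 0 < b ⬝ᵥ M *ᵥ b := by simpa using hM.dotProduct_mulVec_pos h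
    linarith

end Aux

/-- For a symmetric positive definite block matrix `[[Jxx, Jxy], [Jyx, Jyy]]`, the spectral
radius of `Jxx⁻¹ Jxy Jyy⁻¹ Jyx` is strictly less than 1: every complex eigenvalue has
modulus `< 1`. -/
theorem stmt17 {na nb : ℕ}
    (Jxx : Matrix (Fin na) (Fin na) ℝ) (Jxy : Matrix (Fin na) (Fin nb) ℝ)
    (Jyx : Matrix (Fin nb) (Fin na) ℝ) (Jyy : Matrix (Fin nb) (Fin nb) ℝ)
    (hsym : Jyx = Jxyᵀ)
    (hpd : (Matrix.fromBlocks Jxx Jxy Jyx Jyy).PosDef) :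
    ∀ z ∈ spectrum ℂ ((Jxx⁻¹ * Jxy * Jyy⁻¹ * Jyx).map (algebraMap ℝ ℂ)), ‖z‖ < 1 := by
  intro z hz
  have hH : Jxyᴴ = Jxyᵀ := by
    ext i j
    simp [conjTranspose_apply]
  subst hsym
  rw [← hH] at hpd
  set S : Matrix (Fin na) (Fin na) ℝ := Jxy * Jyy⁻¹ * Jxyᴴ with hSdef
  have hA : Jxx.PosDef := block_posDef_left hpd
  have hD : Jyy.PosDef := block_posDef_right hpd
  have hS : S.PosSemidef := hD.inv.posSemidef.mul_mul_conjTranspose_same Jxy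
  have hSchur : (Jxx - S).PosDef := schur_posDef hpd
  set φ := algebraMap ℝ ℂ
  set M : Matrix (Fin na) (Fin na) ℝ := Jxx⁻¹ * Jxy * Jyy⁻¹ * Jxyᵀ with hMdef
  -- extract eigenvector
  rw [spectrum.mem_iff] at hz
  have hdet : (algebraMap ℂ (Matrix (Fin na) (Fin na) ℂ) z - M.map φ).det = 0 := by
    by_contra hne
    exact hz ((isUnit_iff_isUnit_det _).mpr (isUnit_iff_ne_zero.mpr hne))
  obtain ⟨v, hveq, hv0⟩ := (Matrix.exists_mulVec_eq_zero_iff).mpr hdet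
  have heq : (M.map φ) *ᵥ v = z • v := by
    have h1 : (algebraMap ℂ (Matrix (Fin na) (Fin na) ℂ) z - M.map φ) *ᵥ v = 0 := hv0
    rw [Algebra.algebraMap_eq_smul_one, sub_mulVec, smul_mulVec, one_mulVec] at h1
    exact (sub_eq_zero.mp h1).symm
  -- multiply by Jxx
  have hkey : Jxx.map φ * M.map φ = S.map φ := by
    rw [← Matrix.map_mul]
    rw [hMdef, hSdef, hH]
    rw [show Jxx * (Jxx⁻¹ * Jxy * Jyy⁻¹ * Jxyᵀ) = (Jxx * Jxx⁻¹) * (Jxy * Jyy⁻¹ * Jxyᵀ) by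
      simp [Matrix.mul_assoc]]
    rw [Matrix.mul_nonsing_inv Jxx hA.det_pos.ne'.isUnit, Matrix.one_mul]
  have heq2 : (S.map φ) *ᵥ v = z • ((Jxx.map φ) *ᵥ v) := by
    rw [← hkey, ← mulVec_mulVec, heq, mulVec_smul]
  -- take quadratic forms
  set a : Fin na → ℝ := fun i => (v i).re with ha
  set b : Fin na → ℝ := fun i => (v i).im with hb
  have hq := quad_complexify S hS.1 v
  have hp := quad_complexify Jxx hA.1 v
  set qr : ℝ := a ⬝ᵥ S *ᵥ a + b ⬝ᵥ S *ᵥ b with hqr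
  set pr : ℝ := a ⬝ᵥ Jxx *ᵥ a + b ⬝ᵥ Jxx *ᵥ b with hpr
  have hab : a ≠ 0 ∨ b ≠ 0 := by
    by_contra hc
    push_neg at hc
    apply hveq
    funext i
    have h1 := congrFun hc.1 i
    have h2 := congrFun hc.2 i
    exact Complex.ext h1 h2
  have hpr_pos : 0 < pr := quad_pos hA hab
  have hdiff : qr < pr := by
    have := quad_pos hSchur hab
    have hrw : a ⬝ᵥ (Jxx - S) *ᵥ a + b ⬝ᵥ (Jxx - S) *ᵥ b = pr - qr := by
      simp [sub_mulVec, dotProduct_sub, hpr, hqr]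
      ring
    rw [hrw] at this
    linarith
  have hqr_nonneg : 0 ≤ qr := by
    have h1 : 0 ≤ a ⬝ᵥ S *ᵥ a := by simpa using hS.dotProduct_mulVec_nonneg a
    have h2 : 0 ≤ b ⬝ᵥ S *ᵥ b := by simpa using hS.dotProduct_mulVec_nonneg b
    linarith
  -- the scalar identity
  have hid : (qr : ℂ) = z * (pr : ℂ) := by
    calc (qr : ℂ) = star v ⬝ᵥ (S.map φ) *ᵥ v := hq.symm
      _ = star v ⬝ᵥ (z • ((Jxx.map φ) *ᵥ v)) := by rw [heq2]
      _ = z * (star v ⬝ᵥ (Jxx.map φ) *ᵥ v) := by rw [dotProduct_smul]; rfl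
      _ = z * (pr : ℂ) := by rw [hp]
  have hpne : (pr : ℂ) ≠ 0 := by
    exact_mod_cast hpr_pos.ne'
  have hzval : z = ((qr / pr : ℝ) : ℂ) := by
    push_cast
    field_simp
    linear_combination -hid
  rw [hzval, Complex.norm_real, Real.norm_eq_abs, abs_of_nonneg (div_nonneg hqr_nonneg hpr_pos.le)]
  rw [div_lt_one hpr_pos]
  exact hdiff
end
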